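/- arXiv:2510.22714 — 3 statements merged into one kernel-verified Lean document; each statement's English description precedes it below -/
import Mathlib

section
/- Let X be a nonconstant real random variable with finite third moment, mean μ and variance σ² > 0, and let X_1, X_2, X_3 be three i.i.d. copies of X. Then the skewness coefficient Sk(X) := E[(X - μ)^3]/σ³ satisfies Sk(X) = E[(X_1 - X_3)(X_1 - X_2)^2]/σ³ = √8 · E[(X_1 - X_3)(X_1 - X_2)^2] / (E[(X_1 - X_2)^2])^{3/2} = (√2/3) · E[D_1 D_2 D_3] / (E[(X_1 - X_2)^2])^{3/2}, where D_i := ∑_{j ≠ i}(X_i - X_j). -/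
open MeasureTheory ProbabilityTheory Finset
open scoped ENNReal

lemma iIndepFun_ae_congr {Ω ι : Type*} {mΩ : MeasurableSpace Ω} {μ : Measure Ω}
    {β : ι → Type*} {m : ∀ i, MeasurableSpace (β i)} {f g : ∀ i, Ω → β i}
    (h : iIndepFun f μ) (hfg : ∀ i, f i =ᵐ[μ] g i) :
    iIndepFun g μ := by
  rw [iIndepFun_iff_measure_inter_preimage_eq_mul] at h ⊢
  intro S sets hsets
  have hS : ∀ᵐ ω ∂μ, ∀ i ∈ S, f i ω = g i ω :=
    (ae_ball_iff S.countable_toSet).2 fun i _ => hfg i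
  have e1 : (⋂ i ∈ S, f i ⁻¹' sets i) =ᵐ[μ] (⋂ i ∈ S, g i ⁻¹' sets i) := by
    rw [Filter.eventuallyEq_set]
    filter_upwards [hS] with ω hω
    simp only [Set.mem_iInter, Set.mem_preimage]
    constructor <;> intro hmem i hi
    · rw [← hω i hi]; exact hmem i hi
    · rw [hω i hi]; exact hmem i hi
  rw [← measure_congr e1, h S hsets]
  refine Finset.prod_congr rfl fun i hi => measure_congr ?_
  rw [Filter.eventuallyEq_set]
  filter_upwards [hfg i] with ω hω
  simp [Set.mem_preimage, hω]

lemma integrable_cube {Ω : Type*} {mΩ : MeasurableSpace Ω} {μ : Measure Ω} {f : Ω → ℝ}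
    (hf : MemLp f 3 μ) : Integrable (fun ω => f ω ^ 3) μ := by
  have h := hf.integrable_norm_rpow (by norm_num) (by norm_num)
  refine Integrable.mono' h
    (hf.aestronglyMeasurable.aemeasurable.pow_const 3).aestronglyMeasurable
    (ae_of_all _ fun ω => le_of_eq ?_)
  rw [norm_pow, ENNReal.toReal_ofNat, ← Real.rpow_natCast]; norm_num

theorem skewness_D_representations
    {Ω : Type*} {mΩ : MeasurableSpace Ω} {μ : Measure Ω} [IsProbabilityMeasure μ]
    (X : Ω → ℝ) (Y : Fin 3 → Ω → ℝ) (μX σ : ℝ) (D : Fin 3 → Ω → ℝ)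
    (hX : MemLp X 3 μ)
    (hμX : μX = ∫ a, X a ∂μ) (hσ : σ = Real.sqrt (variance X μ))
    (hσpos : 0 < variance X μ)
    (hindep : iIndepFun Y μ)
    (hid : ∀ i, IdentDistrib (Y i) X μ μ)
    (hD : ∀ i ω, D i ω = ∑ j ∈ Finset.univ.erase i, (Y i ω - Y j ω)) :
    ((∫ ω, (X ω - μX) ^ 3 ∂μ) / σ ^ 3
        = (∫ ω, (Y 0 ω - Y 2 ω) * (Y 0 ω - Y 1 ω) ^ 2 ∂μ) / σ ^ 3)
    ∧ ((∫ ω, (X ω - μX) ^ 3 ∂μ) / σ ^ 3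
        = Real.sqrt 8 * (∫ ω, (Y 0 ω - Y 2 ω) * (Y 0 ω - Y 1 ω) ^ 2 ∂μ)
            / (∫ ω, (Y 0 ω - Y 1 ω) ^ 2 ∂μ) ^ ((3 : ℝ) / 2))
    ∧ ((∫ ω, (X ω - μX) ^ 3 ∂μ) / σ ^ 3
        = (Real.sqrt 2 / 3) * (∫ ω, D 0 ω * D 1 ω * D 2 ω ∂μ)
            / (∫ ω, (Y 0 ω - Y 1 ω) ^ 2 ∂μ) ^ ((3 : ℝ) / 2)) := by
  set v : ℝ := variance X μ with hv
  set c3 : ℝ := ∫ ω, (X ω - μX) ^ 3 ∂μ with hc3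
  -- measurable modifications
  have hYae : ∀ i, AEMeasurable (Y i) μ := fun i => (hid i).aemeasurable_fst
  set W : Fin 3 → Ω → ℝ := fun i => (hYae i).mk (Y i) with hWdef
  have hWm : ∀ i, Measurable (W i) := fun i => (hYae i).measurable_mk
  have hWae : ∀ i, Y i =ᵐ[μ] W i := fun i => (hYae i).ae_eq_mk
  set Z : Fin 3 → Ω → ℝ := fun i ω => W i ω - μX with hZdef
  have hZm : ∀ i, Measurable (Z i) := fun i => (hWm i).sub measurable_const
  have hWid : ∀ i, IdentDistrib (W i) X μ μ :=
    fun i => (IdentDistrib.of_ae_eq ((hWm i).aemeasurable) (hWae i).symm).trans (hid i)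
  have hidZ : ∀ i, IdentDistrib (Z i) (fun ω => X ω - μX) μ μ :=
    fun i => (hWid i).comp (measurable_id.sub measurable_const)
  have hXc : MemLp (fun ω => X ω - μX) 3 μ := hX.sub (memLp_const μX)
  have hZ3 : ∀ i, MemLp (Z i) 3 μ := fun i => (hidZ i).memLp_iff.2 hXc
  -- independence of Z
  have hindepW : iIndepFun W μ := iIndepFun_ae_congr hindep hWae
  have hindepZ : iIndepFun Z μ :=
    hindepW.comp (fun _ => fun x => x - μX) (fun _ => measurable_id.sub measurable_const)
  -- integrability of powers
  have intZ : ∀ (i : Fin 3) (p : ℕ), p ≤ 3 → Integrable (fun ω => Z i ω ^ p) μ := by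
    intro i p hp
    interval_cases p
    · simpa using integrable_const (1 : ℝ)
    · simpa using (hZ3 i).integrable (by norm_num)
    · exact ((hZ3 i).mono_exponent (by norm_num)).integrable_sq
    · exact integrable_cube (hZ3 i)
  -- moments of X - μX
  have hXint : Integrable X μ := hX.integrable (by norm_num)
  have hXc1 : ∫ ω, (X ω - μX) ∂μ = 0 := by
    rw [integral_sub hXint (integrable_const _), integral_const, probReal_univ, one_smul, hμX, sub_self]
  have hXc2 : ∫ ω, (X ω - μX) ^ 2 ∂μ = v := by
    have h2 := variance_eq_integral hX.aestronglyMeasurable.aemeasurable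
    rw [hv, h2, ← hμX]
  -- moments of Z
  have hmk : ∀ (i : Fin 3) (k : ℕ), ∫ ω, Z i ω ^ k ∂μ = ∫ ω, (X ω - μX) ^ k ∂μ :=
    fun i k => ((hidZ i).comp (measurable_id.pow_const k)).integral_eq
  have hm1 : ∀ i, ∫ ω, Z i ω ∂μ = 0 := by
    intro i
    have h := hmk i 1
    simp only [pow_one] at h
    exact h.trans hXc1
  have hm2 : ∀ i, ∫ ω, Z i ω ^ 2 ∂μ = v := fun i => (hmk i 2).trans hXc2
  have hm3 : ∀ i, ∫ ω, Z i ω ^ 3 ∂μ = c3 := fun i => (hmk i 3).trans hc3.symm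
  -- pairwise product formulas
  have hpairmul : ∀ (i j : Fin 3), i ≠ j → ∀ (p q : ℕ), p ≤ 3 → q ≤ 3 →
      (∫ ω, Z i ω ^ p * Z j ω ^ q ∂μ)
        = (∫ ω, Z i ω ^ p ∂μ) * ∫ ω, Z j ω ^ q ∂μ := by
    intro i j hij p q hp hq
    have h := (hindepZ.indepFun hij).comp (φ := fun x : ℝ => x ^ p) (ψ := fun x : ℝ => x ^ q)
      (measurable_id.pow_const p) (measurable_id.pow_const q)
    have := h.integral_mul_eq_mul_integral (intZ i p hp).aestronglyMeasurable (intZ j q hq).aestronglyMeasurable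
    simpa [Function.comp] using this
  have hpairint : ∀ (i j : Fin 3), i ≠ j → ∀ (p q : ℕ), p ≤ 3 → q ≤ 3 →
      Integrable (fun ω => Z i ω ^ p * Z j ω ^ q) μ := by
    intro i j hij p q hp hq
    have h := (hindepZ.indepFun hij).comp (φ := fun x : ℝ => x ^ p) (ψ := fun x : ℝ => x ^ q)
      (measurable_id.pow_const p) (measurable_id.pow_const q)
    have := h.integrable_mul (intZ i p hp) (intZ j q hq)
    exact this
  have M21 : ∀ (i j : Fin 3), i ≠ j → ∫ ω, Z i ω ^ 2 * Z j ω ∂μ = 0 := by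
    intro i j hij
    have := hpairmul i j hij 2 1 (by norm_num) (by norm_num)
    simpa [pow_one, hm1 j] using this
  have M12 : ∀ (i j : Fin 3), i ≠ j → ∫ ω, Z i ω * Z j ω ^ 2 ∂μ = 0 := by
    intro i j hij
    have := hpairmul i j hij 1 2 (by norm_num) (by norm_num)
    simpa [pow_one, hm1 i] using this
  have M11 : ∀ (i j : Fin 3), i ≠ j → ∫ ω, Z i ω * Z j ω ∂μ = 0 := by
    intro i j hij
    have := hpairmul i j hij 1 1 (by norm_num) (by norm_num)
    simpa [pow_one, hm1 i] using this
  have I21 : ∀ (i j : Fin 3), i ≠ j → Integrable (fun ω => Z i ω ^ 2 * Z j ω) μ := by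
    intro i j hij
    have := hpairint i j hij 2 1 (by norm_num) (by norm_num)
    simpa [pow_one] using this
  have I12 : ∀ (i j : Fin 3), i ≠ j → Integrable (fun ω => Z i ω * Z j ω ^ 2) μ := by
    intro i j hij
    have := hpairint i j hij 1 2 (by norm_num) (by norm_num)
    simpa [pow_one] using this
  have I11 : ∀ (i j : Fin 3), i ≠ j → Integrable (fun ω => Z i ω * Z j ω) μ := by
    intro i j hij
    have := hpairint i j hij 1 1 (by norm_num) (by norm_num)
    simpa [pow_one] using this
  -- triple product
  have htriIndep : IndepFun (fun ω => Z 0 ω * Z 1 ω) (Z 2) μ := by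
    have h := hindepZ.indepFun_finsetProd_of_notMem (fun i => hZm i)
      (s := {0, 1}) (i := 2) (by decide)
    have hprod : (∏ j ∈ ({0, 1} : Finset (Fin 3)), Z j) = fun ω => Z 0 ω * Z 1 ω := by
      rw [Finset.prod_pair (by decide : (0 : Fin 3) ≠ 1)]; rfl
    rwa [hprod] at h
  have Itri : Integrable (fun ω => Z 0 ω * Z 1 ω * Z 2 ω) μ := by
    have := htriIndep.integrable_mul (I11 0 1 (by decide)) (intZ 2 1 (by norm_num) |>.congr ?_)
    · exact this
    · exact ae_of_all _ fun ω => by simp [pow_one]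
  have Mtri : ∫ ω, Z 0 ω * Z 1 ω * Z 2 ω ∂μ = 0 := by
    have hz2 : Integrable (Z 2) μ := by
      have := intZ 2 1 (by norm_num); simpa [pow_one] using this
    have := htriIndep.integral_mul_eq_mul_integral (I11 0 1 (by decide)).aestronglyMeasurable hz2.aestronglyMeasurable
    have h2 : ∫ ω, Z 2 ω ∂μ = 0 := hm1 2
    simpa [Pi.mul_apply, M11 0 1 (by decide), h2] using this
  -- the three key integrals
  have hA : ∫ ω, (Y 0 ω - Y 2 ω) * (Y 0 ω - Y 1 ω) ^ 2 ∂μ = c3 := by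
    have step1 : ∫ ω, (Y 0 ω - Y 2 ω) * (Y 0 ω - Y 1 ω) ^ 2 ∂μ
        = ∫ ω, (Z 0 ω - Z 2 ω) * (Z 0 ω - Z 1 ω) ^ 2 ∂μ := by
      refine integral_congr_ae ?_
      filter_upwards [hWae 0, hWae 1, hWae 2] with ω h0 h1 h2
      rw [h0, h1, h2]
      simp only [hZdef]
      ring
    have expand : (fun ω => (Z 0 ω - Z 2 ω) * (Z 0 ω - Z 1 ω) ^ 2)
        = fun ω => Z 0 ω ^ 3 + ((-2 : ℝ) * (Z 0 ω ^ 2 * Z 1 ω)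
            + (Z 0 ω * Z 1 ω ^ 2 + (-(Z 0 ω ^ 2 * Z 2 ω)
            + ((2 : ℝ) * (Z 0 ω * Z 1 ω * Z 2 ω) + -(Z 1 ω ^ 2 * Z 2 ω))))) := by
      funext ω; ring
    have e1 : Integrable (fun ω => -(Z 1 ω ^ 2 * Z 2 ω)) μ := (I21 1 2 (by decide)).neg
    have n02 : Integrable (fun ω => -(Z 0 ω ^ 2 * Z 2 ω)) μ := (I21 0 2 (by decide)).neg
    have e2 : Integrable (fun ω => (2 : ℝ) * (Z 0 ω * Z 1 ω * Z 2 ω)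
        + -(Z 1 ω ^ 2 * Z 2 ω)) μ := (Itri.const_mul 2).add e1
    have e3 : Integrable (fun ω => -(Z 0 ω ^ 2 * Z 2 ω) + ((2 : ℝ) * (Z 0 ω * Z 1 ω * Z 2 ω)
        + -(Z 1 ω ^ 2 * Z 2 ω))) μ := ((I21 0 2 (by decide)).neg).add e2
    have e4 : Integrable (fun ω => Z 0 ω * Z 1 ω ^ 2 + (-(Z 0 ω ^ 2 * Z 2 ω)
        + ((2 : ℝ) * (Z 0 ω * Z 1 ω * Z 2 ω) + -(Z 1 ω ^ 2 * Z 2 ω)))) μ :=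
      (I12 0 1 (by decide)).add e3
    have e5 : Integrable (fun ω => (-2 : ℝ) * (Z 0 ω ^ 2 * Z 1 ω)
        + (Z 0 ω * Z 1 ω ^ 2 + (-(Z 0 ω ^ 2 * Z 2 ω)
        + ((2 : ℝ) * (Z 0 ω * Z 1 ω * Z 2 ω) + -(Z 1 ω ^ 2 * Z 2 ω))))) μ :=
      ((I21 0 1 (by decide)).const_mul (-2)).add e4
    rw [step1, expand, integral_add (intZ 0 3 le_rfl) e5,
      integral_add ((I21 0 1 (by decide)).const_mul (-2)) e4,
      integral_add (I12 0 1 (by decide)) e3,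
      integral_add n02 e2,
      integral_add (Itri.const_mul 2) e1,
      integral_neg, integral_neg, integral_const_mul, integral_const_mul,
      hm3 0, M21 0 1 (by decide), M12 0 1 (by decide), M21 0 2 (by decide), Mtri,
      M21 1 2 (by decide)]
    ring
  have hB : ∫ ω, (Y 0 ω - Y 1 ω) ^ 2 ∂μ = 2 * v := by
    have step1 : ∫ ω, (Y 0 ω - Y 1 ω) ^ 2 ∂μ = ∫ ω, (Z 0 ω - Z 1 ω) ^ 2 ∂μ := by
      refine integral_congr_ae ?_
      filter_upwards [hWae 0, hWae 1] with ω h0 h1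
      rw [h0, h1]
      simp only [hZdef]
      ring
    have expand : (fun ω => (Z 0 ω - Z 1 ω) ^ 2)
        = fun ω => Z 0 ω ^ 2 + ((-2 : ℝ) * (Z 0 ω * Z 1 ω) + Z 1 ω ^ 2) := by
      funext ω; ring
    have e1 : Integrable (fun ω => (-2 : ℝ) * (Z 0 ω * Z 1 ω) + Z 1 ω ^ 2) μ :=
      ((I11 0 1 (by decide)).const_mul (-2)).add (intZ 1 2 (by norm_num))
    rw [step1, expand, integral_add (intZ 0 2 (by norm_num)) e1,
      integral_add ((I11 0 1 (by decide)).const_mul (-2)) (intZ 1 2 (by norm_num)),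
      integral_const_mul, hm2 0, hm2 1, M11 0 1 (by decide)]
    ring
  have hD0 : ∀ ω, D 0 ω = (Y 0 ω - Y 1 ω) + (Y 0 ω - Y 2 ω) := by
    intro ω
    rw [hD, show (Finset.univ.erase (0 : Fin 3)) = {1, 2} from by decide,
      Finset.sum_insert (by decide), Finset.sum_singleton]
  have hD1 : ∀ ω, D 1 ω = (Y 1 ω - Y 0 ω) + (Y 1 ω - Y 2 ω) := by
    intro ω
    rw [hD, show (Finset.univ.erase (1 : Fin 3)) = {0, 2} from by decide,
      Finset.sum_insert (by decide), Finset.sum_singleton]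
  have hD2 : ∀ ω, D 2 ω = (Y 2 ω - Y 0 ω) + (Y 2 ω - Y 1 ω) := by
    intro ω
    rw [hD, show (Finset.univ.erase (2 : Fin 3)) = {0, 1} from by decide,
      Finset.sum_insert (by decide), Finset.sum_singleton]
  have hC : ∫ ω, D 0 ω * D 1 ω * D 2 ω ∂μ = 6 * c3 := by
    have step1 : ∫ ω, D 0 ω * D 1 ω * D 2 ω ∂μ
        = ∫ ω, (2 * Z 0 ω - Z 1 ω - Z 2 ω) * (2 * Z 1 ω - Z 0 ω - Z 2 ω)
            * (2 * Z 2 ω - Z 0 ω - Z 1 ω) ∂μ := by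
      refine integral_congr_ae ?_
      filter_upwards [hWae 0, hWae 1, hWae 2] with ω h0 h1 h2
      rw [hD0 ω, hD1 ω, hD2 ω, h0, h1, h2]
      simp only [hZdef]
      ring
    have expand : (fun ω => (2 * Z 0 ω - Z 1 ω - Z 2 ω) * (2 * Z 1 ω - Z 0 ω - Z 2 ω)
            * (2 * Z 2 ω - Z 0 ω - Z 1 ω))
        = fun ω => (2 : ℝ) * Z 0 ω ^ 3 + ((2 : ℝ) * Z 1 ω ^ 3 + ((2 : ℝ) * Z 2 ω ^ 3
            + ((-3 : ℝ) * (Z 0 ω ^ 2 * Z 1 ω) + ((-3 : ℝ) * (Z 0 ω ^ 2 * Z 2 ω)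
            + ((-3 : ℝ) * (Z 1 ω ^ 2 * Z 0 ω) + ((-3 : ℝ) * (Z 1 ω ^ 2 * Z 2 ω)
            + ((-3 : ℝ) * (Z 2 ω ^ 2 * Z 0 ω) + ((-3 : ℝ) * (Z 2 ω ^ 2 * Z 1 ω)
            + (12 : ℝ) * (Z 0 ω * Z 1 ω * Z 2 ω))))))))) := by
      funext ω; ring
    have f9 : Integrable (fun ω => (-3 : ℝ) * (Z 2 ω ^ 2 * Z 1 ω) + ((12 : ℝ) * (Z 0 ω * Z 1 ω * Z 2 ω))) μ :=
      ((I21 2 1 (by decide)).const_mul (-3)).add (Itri.const_mul 12)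
    have f8 : Integrable (fun ω => (-3 : ℝ) * (Z 2 ω ^ 2 * Z 0 ω) + ((-3 : ℝ) * (Z 2 ω ^ 2 * Z 1 ω) + ((12 : ℝ) * (Z 0 ω * Z 1 ω * Z 2 ω)))) μ := ((I21 2 0 (by decide)).const_mul (-3)).add f9
    have f7 : Integrable (fun ω => (-3 : ℝ) * (Z 1 ω ^ 2 * Z 2 ω) + ((-3 : ℝ) * (Z 2 ω ^ 2 * Z 0 ω) + ((-3 : ℝ) * (Z 2 ω ^ 2 * Z 1 ω) + ((12 : ℝ) * (Z 0 ω * Z 1 ω * Z 2 ω))))) μ := ((I21 1 2 (by decide)).const_mul (-3)).add f8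
    have f6 : Integrable (fun ω => (-3 : ℝ) * (Z 1 ω ^ 2 * Z 0 ω) + ((-3 : ℝ) * (Z 1 ω ^ 2 * Z 2 ω) + ((-3 : ℝ) * (Z 2 ω ^ 2 * Z 0 ω) + ((-3 : ℝ) * (Z 2 ω ^ 2 * Z 1 ω) + ((12 : ℝ) * (Z 0 ω * Z 1 ω * Z 2 ω)))))) μ := ((I21 1 0 (by decide)).const_mul (-3)).add f7
    have f5 : Integrable (fun ω => (-3 : ℝ) * (Z 0 ω ^ 2 * Z 2 ω) + ((-3 : ℝ) * (Z 1 ω ^ 2 * Z 0 ω) + ((-3 : ℝ) * (Z 1 ω ^ 2 * Z 2 ω) + ((-3 : ℝ) * (Z 2 ω ^ 2 * Z 0 ω) + ((-3 : ℝ) * (Z 2 ω ^ 2 * Z 1 ω) + ((12 : ℝ) * (Z 0 ω * Z 1 ω * Z 2 ω))))))) μ := ((I21 0 2 (by decide)).const_mul (-3)).add f6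
    have f4 : Integrable (fun ω => (-3 : ℝ) * (Z 0 ω ^ 2 * Z 1 ω) + ((-3 : ℝ) * (Z 0 ω ^ 2 * Z 2 ω) + ((-3 : ℝ) * (Z 1 ω ^ 2 * Z 0 ω) + ((-3 : ℝ) * (Z 1 ω ^ 2 * Z 2 ω) + ((-3 : ℝ) * (Z 2 ω ^ 2 * Z 0 ω) + ((-3 : ℝ) * (Z 2 ω ^ 2 * Z 1 ω) + ((12 : ℝ) * (Z 0 ω * Z 1 ω * Z 2 ω)))))))) μ := ((I21 0 1 (by decide)).const_mul (-3)).add f5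
    have f3 : Integrable (fun ω => (2 : ℝ) * Z 2 ω ^ 3 + ((-3 : ℝ) * (Z 0 ω ^ 2 * Z 1 ω) + ((-3 : ℝ) * (Z 0 ω ^ 2 * Z 2 ω) + ((-3 : ℝ) * (Z 1 ω ^ 2 * Z 0 ω) + ((-3 : ℝ) * (Z 1 ω ^ 2 * Z 2 ω) + ((-3 : ℝ) * (Z 2 ω ^ 2 * Z 0 ω) + ((-3 : ℝ) * (Z 2 ω ^ 2 * Z 1 ω) + ((12 : ℝ) * (Z 0 ω * Z 1 ω * Z 2 ω))))))))) μ := ((intZ 2 3 le_rfl).const_mul 2).add f4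
    have f2 : Integrable (fun ω => (2 : ℝ) * Z 1 ω ^ 3 + ((2 : ℝ) * Z 2 ω ^ 3 + ((-3 : ℝ) * (Z 0 ω ^ 2 * Z 1 ω) + ((-3 : ℝ) * (Z 0 ω ^ 2 * Z 2 ω) + ((-3 : ℝ) * (Z 1 ω ^ 2 * Z 0 ω) + ((-3 : ℝ) * (Z 1 ω ^ 2 * Z 2 ω) + ((-3 : ℝ) * (Z 2 ω ^ 2 * Z 0 ω) + ((-3 : ℝ) * (Z 2 ω ^ 2 * Z 1 ω) + ((12 : ℝ) * (Z 0 ω * Z 1 ω * Z 2 ω)))))))))) μ := ((intZ 1 3 le_rfl).const_mul 2).add f3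
    rw [step1, expand,
      integral_add ((intZ 0 3 le_rfl).const_mul 2) f2,
      integral_add ((intZ 1 3 le_rfl).const_mul 2) f3,
      integral_add ((intZ 2 3 le_rfl).const_mul 2) f4,
      integral_add ((I21 0 1 (by decide)).const_mul (-3)) f5,
      integral_add ((I21 0 2 (by decide)).const_mul (-3)) f6,
      integral_add ((I21 1 0 (by decide)).const_mul (-3)) f7,
      integral_add ((I21 1 2 (by decide)).const_mul (-3)) f8,
      integral_add ((I21 2 0 (by decide)).const_mul (-3)) f9,
      integral_add ((I21 2 1 (by decide)).const_mul (-3)) (Itri.const_mul 12)]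
    simp only [integral_const_mul]
    rw [hm3 0, hm3 1, hm3 2, M21 0 1 (by decide), M21 0 2 (by decide), M21 1 0 (by decide),
      M21 1 2 (by decide), M21 2 0 (by decide), M21 2 1 (by decide), Mtri]
    ring
  -- arithmetic with sqrt and rpow
  have hvnn : (0 : ℝ) ≤ v := hσpos.le
  have hσ3 : σ ^ 3 = v ^ ((3 : ℝ) / 2) := by
    rw [hσ, Real.sqrt_eq_rpow, ← Real.rpow_natCast (v ^ ((1 : ℝ) / 2)) 3,
      ← Real.rpow_mul hvnn]
    norm_num
  have h2v32 : (2 * v) ^ ((3 : ℝ) / 2) = Real.sqrt 8 * v ^ ((3 : ℝ) / 2) := by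
    rw [Real.mul_rpow (by norm_num) hvnn]
    congr 1
    rw [show (8 : ℝ) = (2 : ℝ) ^ (3 : ℕ) from by norm_num, Real.sqrt_eq_rpow,
      ← Real.rpow_natCast (2 : ℝ) 3, ← Real.rpow_mul (by norm_num : (0 : ℝ) ≤ 2)]
    norm_num
  have hsqrt8 : Real.sqrt 8 = 2 * Real.sqrt 2 := by
    rw [show (8 : ℝ) = 2 ^ 2 * 2 from by norm_num, Real.sqrt_mul (by positivity),
      Real.sqrt_sq (by norm_num : (0 : ℝ) ≤ 2)]
  have hvne : v ^ ((3 : ℝ) / 2) ≠ 0 := ne_of_gt (Real.rpow_pos_of_pos hσpos _)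
  have hs2 : Real.sqrt 2 ≠ 0 := by positivity
  have hs8 : Real.sqrt 8 ≠ 0 := by positivity
  refine ⟨?_, ?_, ?_⟩
  · rw [hA]
  · rw [hA, hB, h2v32, hσ3]
    field_simp
  · rw [hC, hB, h2v32, hσ3, hsqrt8]
    field_simp
    ring
end

section
/- Let X be a real random variable with mean μ = E[X] and finite central moments μ_j := E[(X - μ)^j] for j = 1, ..., n+1, where n ≥ 1, and let X_1, X_2, X_3 be i.i.d. copies of X. Then μ_{n+1} = E[X (X - μ)^n] - μ μ_n = E[(X_1 - X_2)(X_1 - μ)^n] = E[(X_1 - X_3)(X_1 - X_2)^n] - ∑_{j=2}^{n-1} (-1)^j binom(n, j) μ_j μ_{n+1-j}. -/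
open MeasureTheory ProbabilityTheory Finset
open scoped ENNReal NNReal

lemma my_iIndepFun_ae_congr {Ω ι : Type*} {mΩ : MeasurableSpace Ω} {μ : Measure Ω}
    {β : ι → Type*} {m : ∀ i, MeasurableSpace (β i)} {f g : ∀ i, Ω → β i}
    (h : iIndepFun (m := m) f μ) (hfg : ∀ i, f i =ᵐ[μ] g i) : iIndepFun (m := m) g μ := by
  rw [iIndepFun_iff_measure_inter_preimage_eq_mul] at h ⊢
  intro S sets hsets
  have hae : ∀ᵐ ω ∂μ, ∀ i ∈ S, f i ω = g i ω :=
    (MeasureTheory.ae_ball_iff S.countable_toSet).mpr fun i _ => hfg i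
  have h1 : μ (⋂ i ∈ S, g i ⁻¹' sets i) = μ (⋂ i ∈ S, f i ⁻¹' sets i) := by
    apply measure_congr
    rw [Filter.eventuallyEq_set]
    filter_upwards [hae] with ω hω
    simp only [Set.mem_iInter, Set.mem_preimage]
    exact ⟨fun H i hi => (hω i hi) ▸ H i hi, fun H i hi => (hω i hi).symm ▸ H i hi⟩
  have h2 : ∀ i ∈ S, μ (g i ⁻¹' sets i) = μ (f i ⁻¹' sets i) := by
    intro i hi
    apply measure_congr
    rw [Filter.eventuallyEq_set]
    filter_upwards [hfg i] with ω hω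
    simp [Set.mem_preimage, hω]
  rw [h1, h S hsets]
  exact (Finset.prod_congr rfl h2).symm

lemma my_integrable_pow {Ω : Type*} {mΩ : MeasurableSpace Ω} {μ : Measure Ω}
    [IsProbabilityMeasure μ] {f : Ω → ℝ} {N : ℕ} (hf : MemLp f N μ) {m : ℕ} (hm : m ≤ N) :
    Integrable (fun ω => f ω ^ m) μ := by
  rcases Nat.eq_zero_or_pos m with hm0 | hm0
  · simp [hm0]
  have hfm : MemLp f m μ := hf.mono_exponent (by exact_mod_cast hm)
  have h1 : MemLp (fun ω => ‖f ω‖ ^ ((m : ℝ≥0∞)).toReal) 1 μ :=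
    hfm.norm_rpow (by exact_mod_cast hm0.ne') (by simp)
  have h2 : Integrable (fun ω => ‖f ω‖ ^ ((m : ℝ≥0∞)).toReal) μ :=
    memLp_one_iff_integrable.mp h1
  refine h2.mono (hf.aestronglyMeasurable.pow m) ?_
  filter_upwards with ω
  have : ‖f ω ^ m‖ = ‖f ω‖ ^ ((m : ℝ≥0∞)).toReal := by
    simp [Real.rpow_natCast]
  rw [this]
  exact le_abs_self _
theorem central_moment_recursion
    {Ω : Type*} {mΩ : MeasurableSpace Ω} {μ : Measure Ω} [IsProbabilityMeasure μ]
    (n : ℕ) (hn : 1 ≤ n)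
    (X : Ω → ℝ) (Y : Fin 3 → Ω → ℝ) (μX : ℝ) (mom : ℕ → ℝ)
    (hX : MemLp X (n + 1) μ)
    (hμX : μX = ∫ a, X a ∂μ)
    (hmom : ∀ j, mom j = ∫ ω, (X ω - μX) ^ j ∂μ)
    (hindep : iIndepFun Y μ)
    (hid : ∀ i, IdentDistrib (Y i) X μ μ) :
    (mom (n + 1) = (∫ ω, X ω * (X ω - μX) ^ n ∂μ) - μX * mom n)
    ∧ (mom (n + 1) = ∫ ω, (Y 0 ω - Y 1 ω) * (Y 0 ω - μX) ^ n ∂μ)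
    ∧ (mom (n + 1)
        = (∫ ω, (Y 0 ω - Y 2 ω) * (Y 0 ω - Y 1 ω) ^ n ∂μ)
          - ∑ j ∈ Finset.Icc 2 (n - 1),
              (-1 : ℝ) ^ j * (n.choose j : ℝ) * mom j * mom (n + 1 - j)) := by
  have hX' : MemLp X ((n + 1 : ℕ) : ℝ≥0∞) μ := by exact_mod_cast hX
  have hW : MemLp (fun ω => X ω - μX) ((n + 1 : ℕ) : ℝ≥0∞) μ := hX'.sub (memLp_const μX)
  have hintW : ∀ m, m ≤ n + 1 → Integrable (fun ω => (X ω - μX) ^ m) μ :=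
    fun m hm => my_integrable_pow hW hm
  have hXint : Integrable X μ := hX.integrable le_add_self
  have hmom0 : mom 0 = 1 := by rw [hmom 0]; simp
  have hmom1 : mom 1 = 0 := by
    rw [hmom 1]
    simp only [pow_one]
    rw [integral_sub hXint (integrable_const μX), integral_const]
    simp [hμX]
  have part1 : mom (n + 1) = (∫ ω, X ω * (X ω - μX) ^ n ∂μ) - μX * mom n := by
    have he : (∫ ω, X ω * (X ω - μX) ^ n ∂μ)
        = ∫ ω, ((X ω - μX) ^ (n + 1) + μX * (X ω - μX) ^ n) ∂μ :=
      integral_congr_ae (Filter.Eventually.of_forall fun ω => by ring)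
    rw [he, integral_add (hintW (n + 1) le_rfl) ((hintW n (by omega)).const_mul μX),
      integral_const_mul _ _, ← hmom (n + 1), ← hmom n]
    ring
  -- measurable modifications
  have hYae : ∀ i, AEMeasurable (Y i) μ := fun i => (hid i).aemeasurable_fst
  obtain ⟨Y', hY'meas, hYae'⟩ : ∃ Y' : Fin 3 → Ω → ℝ,
      (∀ i, Measurable (Y' i)) ∧ ∀ i, Y i =ᵐ[μ] Y' i :=
    ⟨fun i => (hYae i).mk (Y i), fun i => (hYae i).measurable_mk, fun i => (hYae i).ae_eq_mk⟩
  have hindep' : iIndepFun Y' μ := my_iIndepFun_ae_congr hindep hYae'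
  have hid' : ∀ i, IdentDistrib (Y' i) X μ μ := fun i =>
    ⟨(hY'meas i).aemeasurable, (hid i).aemeasurable_snd,
      by rw [← Measure.map_congr (hYae' i)]; exact (hid i).map_eq⟩
  have hsub : Measurable (fun x : ℝ => x - μX) := measurable_id.sub measurable_const
  have hZid : ∀ (i : Fin 3) (m : ℕ), IdentDistrib (fun ω => (Y' i ω - μX) ^ m)
      (fun ω => (X ω - μX) ^ m) μ μ := fun i m => (hid' i).comp (hsub.pow_const m)
  have hZint : ∀ (i : Fin 3) (m : ℕ), m ≤ n + 1 → Integrable (fun ω => (Y' i ω - μX) ^ m) μ :=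
    fun i m hm => (hZid i m).integrable_iff.mpr (hintW m hm)
  have hZmom : ∀ (i : Fin 3) (m : ℕ), ∫ ω, (Y' i ω - μX) ^ m ∂μ = mom m :=
    fun i m => by rw [(hZid i m).integral_eq]; exact (hmom m).symm
  have hindZ : ∀ (i j : Fin 3), i ≠ j → ∀ (a b : ℕ),
      IndepFun (fun ω => (Y' i ω - μX) ^ a) (fun ω => (Y' j ω - μX) ^ b) μ :=
    fun i j hij a b => (hindep'.indepFun hij).comp (hsub.pow_const a) (hsub.pow_const b)
  have hprod_int : ∀ (i j : Fin 3), i ≠ j → ∀ (a b : ℕ), a ≤ n + 1 → b ≤ n + 1 →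
      Integrable (fun ω => (Y' i ω - μX) ^ a * (Y' j ω - μX) ^ b) μ :=
    fun i j hij a b ha hb => (hindZ i j hij a b).integrable_mul (hZint i a ha) (hZint j b hb)
  have hprod_val : ∀ (i j : Fin 3), i ≠ j → ∀ (a b : ℕ), a ≤ n + 1 → b ≤ n + 1 →
      ∫ ω, (Y' i ω - μX) ^ a * (Y' j ω - μX) ^ b ∂μ = mom a * mom b := by
    intro i j hij a b ha hb
    have h := (hindZ i j hij a b).integral_fun_mul_eq_mul_integral (hZint i a ha).aestronglyMeasurable (hZint j b hb).aestronglyMeasurable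
    rw [← hZmom i a, ← hZmom j b]
    exact h
  refine ⟨part1, ?_, ?_⟩
  · -- Part 2
    have e2 : ∫ ω, (Y 0 ω - Y 1 ω) * (Y 0 ω - μX) ^ n ∂μ
        = ∫ ω, ((Y' 0 ω - μX) ^ (n + 1) - (Y' 1 ω - μX) ^ 1 * (Y' 0 ω - μX) ^ n) ∂μ := by
      refine integral_congr_ae ?_
      filter_upwards [hYae' 0, hYae' 1] with ω h0 h1
      rw [h0, h1]; ring
    rw [e2, integral_sub (hZint 0 (n + 1) le_rfl)
        (hprod_int 1 0 (by decide) 1 n (by omega) (by omega)),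
      hZmom 0 (n + 1), hprod_val 1 0 (by decide) 1 n (by omega) (by omega), hmom1]
    ring
  · -- Part 3
    have e3 : ∫ ω, (Y 0 ω - Y 2 ω) * (Y 0 ω - Y 1 ω) ^ n ∂μ
        = ∫ ω, ∑ m ∈ range (n + 1), (-1 : ℝ) ^ (m + n) * (n.choose m : ℝ) *
            ((Y' 0 ω - μX) ^ (m + 1) * (Y' 1 ω - μX) ^ (n - m)
              - (Y' 2 ω - μX) ^ 1 * ((Y' 0 ω - μX) ^ m * (Y' 1 ω - μX) ^ (n - m))) ∂μ := by
      refine integral_congr_ae ?_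
      filter_upwards [hYae' 0, hYae' 1, hYae' 2] with ω h0 h1 h2
      rw [h0, h1, h2]
      rw [show Y' 0 ω - Y' 1 ω = (Y' 0 ω - μX) - (Y' 1 ω - μX) by ring, sub_pow,
        Finset.mul_sum]
      refine Finset.sum_congr rfl fun m hm => ?_
      ring
    have hpair : ∀ (a b : ℕ), IndepFun (fun ω => (Y' 0 ω - μX) ^ a * (Y' 1 ω - μX) ^ b)
        (fun ω => (Y' 2 ω - μX) ^ 1) μ := by
      intro a b
      have h := hindep'.indepFun_prodMk hY'meas 0 1 2 (by decide) (by decide)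
      exact h.comp (show Measurable fun p : ℝ × ℝ => (p.1 - μX) ^ a * (p.2 - μX) ^ b by fun_prop)
        (hsub.pow_const 1)
    have htrip_int : ∀ m, m ≤ n → Integrable (fun ω => (Y' 2 ω - μX) ^ 1 *
        ((Y' 0 ω - μX) ^ m * (Y' 1 ω - μX) ^ (n - m))) μ := fun m hm =>
      (hpair m (n - m)).symm.integrable_mul (hZint 2 1 (by omega))
        (hprod_int 0 1 (by decide) m (n - m) (by omega) (by omega))
    have htrip_val : ∀ m, m ≤ n → ∫ ω, (Y' 2 ω - μX) ^ 1 *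
        ((Y' 0 ω - μX) ^ m * (Y' 1 ω - μX) ^ (n - m)) ∂μ = 0 := by
      intro m hm
      have hv : ∫ ω, (Y' 2 ω - μX) ^ 1 *
          ((Y' 0 ω - μX) ^ m * (Y' 1 ω - μX) ^ (n - m)) ∂μ
          = (∫ ω, (Y' 2 ω - μX) ^ 1 ∂μ) *
            ∫ ω, (Y' 0 ω - μX) ^ m * (Y' 1 ω - μX) ^ (n - m) ∂μ :=
        (hpair m (n - m)).symm.integral_fun_mul_eq_mul_integral (hZint 2 1 (by omega)).aestronglyMeasurable
          (hprod_int 0 1 (by decide) m (n - m) (by omega) (by omega)).aestronglyMeasurable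
      rw [hv, hZmom 2 1, hmom1, zero_mul]
    have hterm_int : ∀ m ∈ range (n + 1), Integrable (fun ω =>
        (-1 : ℝ) ^ (m + n) * (n.choose m : ℝ) *
          ((Y' 0 ω - μX) ^ (m + 1) * (Y' 1 ω - μX) ^ (n - m)
            - (Y' 2 ω - μX) ^ 1 * ((Y' 0 ω - μX) ^ m * (Y' 1 ω - μX) ^ (n - m)))) μ := by
      intro m hm
      rw [mem_range] at hm
      exact ((hprod_int 0 1 (by decide) (m + 1) (n - m) (by omega) (by omega)).sub
        (htrip_int m (by omega))).const_mul _
    have hterm_val : ∀ m ∈ range (n + 1), (∫ ω,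
        (-1 : ℝ) ^ (m + n) * (n.choose m : ℝ) *
          ((Y' 0 ω - μX) ^ (m + 1) * (Y' 1 ω - μX) ^ (n - m)
            - (Y' 2 ω - μX) ^ 1 * ((Y' 0 ω - μX) ^ m * (Y' 1 ω - μX) ^ (n - m))) ∂μ)
        = (-1 : ℝ) ^ (m + n) * (n.choose m : ℝ) * (mom (m + 1) * mom (n - m)) := by
      intro m hm
      rw [mem_range] at hm
      rw [integral_const_mul _ _,
        integral_sub (hprod_int 0 1 (by decide) (m + 1) (n - m) (by omega) (by omega))
          (htrip_int m (by omega)),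
        hprod_val 0 1 (by decide) (m + 1) (n - m) (by omega) (by omega),
        htrip_val m (by omega)]
      ring
    have hsum : ∫ ω, (Y 0 ω - Y 2 ω) * (Y 0 ω - Y 1 ω) ^ n ∂μ
        = ∑ m ∈ range (n + 1),
            (-1 : ℝ) ^ (m + n) * (n.choose m : ℝ) * (mom (m + 1) * mom (n - m)) := by
      rw [e3, integral_finset_sum _ hterm_int]
      exact Finset.sum_congr rfl hterm_val
    have hreflect : ∑ m ∈ range (n + 1),
          (-1 : ℝ) ^ (m + n) * (n.choose m : ℝ) * (mom (m + 1) * mom (n - m))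
        = ∑ j ∈ range (n + 1), (-1 : ℝ) ^ j * (n.choose j : ℝ) * mom j * mom (n + 1 - j) := by
      rw [← Finset.sum_range_reflect
        (fun j => (-1 : ℝ) ^ j * (n.choose j : ℝ) * mom j * mom (n + 1 - j)) (n + 1)]
      refine Finset.sum_congr rfl fun m hm => ?_
      rw [mem_range] at hm
      have hmn : m ≤ n := by omega
      show (-1 : ℝ) ^ (m + n) * (n.choose m : ℝ) * (mom (m + 1) * mom (n - m))
        = (-1 : ℝ) ^ (n - m) * (n.choose (n - m) : ℝ) * mom (n - m) * mom (n + 1 - (n - m))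
      rw [Nat.choose_symm hmn, show n + 1 - (n - m) = m + 1 by omega,
        show ((-1 : ℝ)) ^ (n - m) = (-1 : ℝ) ^ (m + n) by
          rw [show m + n = (n - m) + 2 * m by omega, pow_add, pow_mul]; simp]
      ring
    have hsub2 : insert 0 (Finset.Icc 2 (n - 1)) ⊆ range (n + 1) := by
      intro j hj
      simp only [mem_insert, mem_Icc] at hj
      rw [mem_range]
      omega
    have hzero : ∀ j ∈ range (n + 1), j ∉ insert 0 (Finset.Icc 2 (n - 1)) →
        (-1 : ℝ) ^ j * (n.choose j : ℝ) * mom j * mom (n + 1 - j) = 0 := by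
      intro j hj hj'
      rw [mem_range] at hj
      have hj0 : j ≠ 0 := fun h => hj' (by simp [h])
      have hjm : ¬(2 ≤ j ∧ j ≤ n - 1) := fun h =>
        hj' (by simp only [mem_insert, mem_Icc]; exact Or.inr h)
      have h1 : j = 1 ∨ j = n := by omega
      rcases h1 with h | h
      · rw [h, hmom1]; ring
      · rw [h, show n + 1 - n = 1 by omega, hmom1]; ring
    have hsplit : ∑ j ∈ range (n + 1), (-1 : ℝ) ^ j * (n.choose j : ℝ) * mom j * mom (n + 1 - j)
        = mom (n + 1) + ∑ j ∈ Finset.Icc 2 (n - 1),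
            (-1 : ℝ) ^ j * (n.choose j : ℝ) * mom j * mom (n + 1 - j) := by
      rw [← Finset.sum_subset hsub2 hzero, Finset.sum_insert (by simp)]
      simp [hmom0]
    rw [hsum, hreflect, hsplit]
    ring
end

section
/- Define recursively the functions μ̄_1 := 0, μ̄_2(x_1, x_2) := (1/2)(x_1 - x_2)^2, μ̄_3(x_1, x_2, x_3) := (x_1 - x_3)(x_1 - x_2)^2, μ̄_4(x_1, x_2, x_3, x_4) := (1/2)(x_1 - x_2)^4 - (3/4)(x_1 - x_2)^2 (x_3 - x_4)^2, and for k ≥ 4, μ̄_{k+1}(x_1, ..., x_{k+1}) := (x_1 - x_3)(x_1 - x_2)^k - ∑_{j=2}^{k-1} (-1)^j binom(k, j) μ̄_j(x_1, ..., x_j) μ̄_{k+1-j}(x_{j+1}, ..., x_{k+1}). Let X be a real random variable with mean μ = E[X] and finite moments up to order n+1 (n ≥ 1), and let X_1, ..., X_{n+1} be i.i.d. copies of X. Then for every k with 1 ≤ k ≤ n, E[μ̄_{k+1}(X_1, ..., X_{k+1})] = E[(X - μ)^{k+1}]. -/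
open MeasureTheory ProbabilityTheory Finset Fin.NatCast

/-- The recursively defined functions `μ̄_k`, acting on sequences of reals
(only the first `k` entries are used by `mbar k`). -/
noncomputable def mbar : ℕ → (ℕ → ℝ) → ℝ
  | 0, _ => 0
  | 1, _ => 0
  | 2, x => (1 / 2) * (x 0 - x 1) ^ 2
  | 3, x => (x 0 - x 2) * (x 0 - x 1) ^ 2
  | 4, x => (1 / 2) * (x 0 - x 1) ^ 4 - (3 / 4) * (x 0 - x 1) ^ 2 * (x 2 - x 3) ^ 2
  | (k + 5), x =>
      (x 0 - x 2) * (x 0 - x 1) ^ (k + 4)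
        - ∑ j ∈ (Finset.Icc 2 (k + 3)).attach,
            (-1 : ℝ) ^ (j : ℕ) * ((k + 4).choose (j : ℕ) : ℝ)
              * mbar (j : ℕ) x * mbar (k + 5 - (j : ℕ)) (fun i => x (i + (j : ℕ)))
  termination_by k => k
  decreasing_by
  · have := j.2; simp only [Finset.mem_Icc] at this; omega
  · have := j.2; simp only [Finset.mem_Icc] at this; omega

open scoped ENNReal NNReal

theorem mbar_congr : ∀ (k : ℕ) (x y : ℕ → ℝ), (∀ i < k, x i = y i) → mbar k x = mbar k y := by
  intro k
  induction k using Nat.strong_induction_on with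
  | _ k IH =>
    match k with
    | 0 => intro x y h; simp only [mbar]
    | 1 => intro x y h; simp only [mbar]
    | 2 => intro x y h; simp only [mbar]; rw [h 0 (by omega), h 1 (by omega)]
    | 3 => intro x y h; simp only [mbar]; rw [h 0 (by omega), h 1 (by omega), h 2 (by omega)]
    | 4 => intro x y h; simp only [mbar]; rw [h 0 (by omega), h 1 (by omega), h 2 (by omega), h 3 (by omega)]
    | (k+5) =>
      intro x y h
      simp only [mbar]
      rw [h 0 (by omega), h 1 (by omega), h 2 (by omega)]
      congr 1
      refine Finset.sum_congr rfl fun j _ => ?_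
      have hj := j.2; simp only [Finset.mem_Icc] at hj
      rw [IH j (by omega) x y (fun i hi => h i (by omega)),
        IH (k + 5 - (j:ℕ)) (by omega) _ _ (fun i hi => h (i + (j:ℕ)) (by omega))]

theorem mbar_measurable : ∀ k : ℕ, Measurable (mbar k) := by
  intro k
  induction k using Nat.strong_induction_on with
  | _ k IH =>
    match k with
    | 0 => have h : mbar 0 = fun _ => (0:ℝ) := funext fun x => by simp [mbar]
           rw [h]; exact measurable_const
    | 1 => have h : mbar 1 = fun _ => (0:ℝ) := funext fun x => by simp [mbar]
           rw [h]; exact measurable_const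
    | 2 => have h : mbar 2 = fun x : ℕ → ℝ => (1 / 2) * (x 0 - x 1) ^ 2 := funext fun x => by simp [mbar]
           rw [h]; fun_prop
    | 3 => have h : mbar 3 = fun x : ℕ → ℝ => (x 0 - x 2) * (x 0 - x 1) ^ 2 := funext fun x => by simp [mbar]
           rw [h]; fun_prop
    | 4 => have h : mbar 4 = fun x : ℕ → ℝ => (1 / 2) * (x 0 - x 1) ^ 4 - (3 / 4) * (x 0 - x 1) ^ 2 * (x 2 - x 3) ^ 2 := funext fun x => by simp [mbar]
           rw [h]; fun_prop
    | (k+5) =>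
      have h : mbar (k+5) = fun x => (x 0 - x 2) * (x 0 - x 1) ^ (k + 4)
        - ∑ j ∈ (Finset.Icc 2 (k + 3)).attach,
            (-1 : ℝ) ^ (j : ℕ) * ((k + 4).choose (j : ℕ) : ℝ)
              * mbar (j : ℕ) x * mbar (k + 5 - (j : ℕ)) (fun i => x (i + (j : ℕ))) :=
        funext fun x => by rw [mbar]
      rw [h]
      apply Measurable.sub
      · fun_prop
      · apply Finset.measurable_sum
        intro j _
        have hj := j.2; simp only [Finset.mem_Icc] at hj
        exact ((measurable_const.mul (IH j (by omega))).mul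
          ((IH (k + 5 - (j:ℕ)) (by omega)).comp
            (measurable_pi_lambda _ (fun i => measurable_pi_apply _))))

theorem mbar_add_const : ∀ (k : ℕ) (x : ℕ → ℝ) (c : ℝ), mbar k (fun i => x i + c) = mbar k x := by
  intro k
  induction k using Nat.strong_induction_on with
  | _ k IH =>
    match k with
    | 0 => intro x c; simp [mbar]
    | 1 => intro x c; simp [mbar]
    | 2 => intro x c; simp only [mbar]; ring
    | 3 => intro x c; simp only [mbar]; ring
    | 4 => intro x c; simp only [mbar]; ring
    | (k+5) =>
      intro x c
      rw [mbar, mbar]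
      congr 1
      · ring
      · refine Finset.sum_congr rfl fun j _ => ?_
        have hj := j.2; simp only [Finset.mem_Icc] at hj
        rw [IH j (by omega) x c, IH (k + 5 - (j:ℕ)) (by omega) (fun i => x (i + (j:ℕ))) c]

theorem iIndepFun_congr_ae {Ω : Type*} {mΩ : MeasurableSpace Ω} {μ : Measure Ω}
    {ι : Type*} {β : ι → Type*} [m : ∀ i, MeasurableSpace (β i)]
    {f f' : ∀ i, Ω → β i} (h : iIndepFun f μ) (h' : ∀ i, f i =ᵐ[μ] f' i) :
    iIndepFun f' μ := by
  rw [iIndepFun_iff_measure_inter_preimage_eq_mul] at h ⊢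
  intro S sets hsets
  have h1 := h S hsets
  have key : ∀ i ∈ S, (f i ⁻¹' sets i : Set Ω) =ᵐ[μ] (f' i ⁻¹' sets i : Set Ω) := by
    intro i _
    rw [Filter.eventuallyEq_set]
    filter_upwards [h' i] with ω hω
    simp [Set.mem_preimage, hω]
  have hInter : ((⋂ i ∈ S, f i ⁻¹' sets i : Set Ω)) =ᵐ[μ] ((⋂ i ∈ S, f' i ⁻¹' sets i : Set Ω)) := by
    rw [Filter.eventuallyEq_set]
    have hh : ∀ᵐ ω ∂μ, ∀ i ∈ S, f i ω = f' i ω :=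
      (ae_ball_iff S.countable_toSet).2 fun i _ => h' i
    filter_upwards [hh] with ω hω
    simp only [Set.mem_iInter, Set.mem_preimage]
    exact ⟨fun H i hi => by rw [← hω i hi]; exact H i hi,
           fun H i hi => by rw [hω i hi]; exact H i hi⟩
  rw [← measure_congr hInter, h1]
  exact Finset.prod_congr rfl fun i hi => measure_congr (key i hi)

theorem sub_pow'' (a b : ℝ) (m : ℕ) :
    (a - b)^m = ∑ j ∈ range (m+1), (-1:ℝ)^j * (m.choose j : ℝ) * (a^(m-j) * b^j) := by
  rw [sub_pow]
  rw [← Finset.sum_range_reflect (fun j => (-1:ℝ)^j * (m.choose j : ℝ) * (a^(m-j) * b^j)) (m+1)]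
  refine Finset.sum_congr rfl fun j hj => ?_
  have hj' : j ≤ m := Nat.lt_succ_iff.mp (Finset.mem_range.1 hj)
  rw [show m + 1 - 1 - j = m - j from by omega, show m - (m - j) = j from by omega,
    Nat.choose_symm hj',
    show (-1:ℝ)^(m-j) = (-1)^(j+m) from by
      rw [show j + m = (m - j) + 2*j from by omega, pow_add, pow_mul]; norm_num]
  ring

theorem expand_cross (a b c : ℝ) (m : ℕ) :
    (a - c) * (a - b)^m
      = ∑ j ∈ range (m+1),
          ((-1:ℝ)^j * (m.choose j : ℝ) * (a^(m+1-j) * b^j)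
            - (-1:ℝ)^j * (m.choose j : ℝ) * ((a^(m-j) * b^j) * c^1)) := by
  rw [sub_pow'' a b m, Finset.mul_sum]
  refine Finset.sum_congr rfl fun j hj => ?_
  have hj' : j ≤ m := Nat.lt_succ_iff.mp (Finset.mem_range.1 hj)
  rw [show m + 1 - j = (m - j) + 1 from by omega, pow_succ, pow_one]
  ring

section Core
variable {Ω : Type*} {mΩ : MeasurableSpace Ω} {μ : Measure Ω} [IsProbabilityMeasure μ]
  {n : ℕ} {X0 : Ω → ℝ} {Z : Fin (n+1) → Ω → ℝ}

theorem pow_integrable {f : Ω → ℝ}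
    (hf : MeasureTheory.MemLp f (n+1) μ) {j : ℕ} (hj : j ≤ n + 1) :
    Integrable (fun ω => f ω ^ j) μ := by
  rcases Nat.eq_zero_or_pos j with rfl | hj0
  · simpa using integrable_const (1:ℝ)
  have h1 : MeasureTheory.MemLp f j μ := by
    refine hf.mono_exponent ?_
    have h2 : ((j:ℕ) : ℝ≥0∞) ≤ ((n+1:ℕ) : ℝ≥0∞) := by exact_mod_cast hj
    simpa using h2
  have h2 := h1.integrable_norm_rpow (by exact_mod_cast Nat.cast_ne_zero.2 (by omega)) (by simp)
  refine h2.mono' ?_ ?_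
  · exact (h1.aestronglyMeasurable.aemeasurable.pow_const j).aestronglyMeasurable
  · filter_upwards with ω
    simp only [Real.norm_eq_abs, abs_pow, ENNReal.toReal_natCast]
    rw [← Real.rpow_natCast |f ω| j]

theorem indep_blocks (hZm : ∀ i, Measurable (Z i))
    (hZi : iIndepFun Z μ)
    {K j : ℕ} (hj : j ≤ K) {e : ℕ → Fin (n+1)} (he : Set.InjOn e (Set.Iio K))
    {F G : (ℕ → ℝ) → ℝ} (hF : Measurable F) (hG : Measurable G)
    (hFd : ∀ x y : ℕ → ℝ, (∀ i < j, x i = y i) → F x = F y)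
    (hGd : ∀ x y : ℕ → ℝ, (∀ i < K - j, x i = y i) → G x = G y) :
    IndepFun (fun ω => F (fun i => Z (e i) ω)) (fun ω => G (fun i => Z (e (i+j)) ω)) μ := by
  classical
  set S : Finset (Fin (n+1)) := (Finset.range j).image e with hS
  set T : Finset (Fin (n+1)) := (Finset.Ico j K).image e with hT
  have hdisj : Disjoint S T := by
    rw [Finset.disjoint_left]
    rintro a ha hb
    simp only [hS, hT, Finset.mem_image, Finset.mem_range, Finset.mem_Ico] at ha hb
    obtain ⟨i1, hi1, rfl⟩ := ha
    obtain ⟨i2, hi2, he2⟩ := hb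
    have := he (Set.mem_Iio.2 (by omega : (i2:ℕ) < K)) (Set.mem_Iio.2 (by omega : (i1:ℕ) < K)) he2
    omega
  have base := hZi.indepFun_finset S T hdisj hZm
  set F' : ((i : S) → ℝ) → ℝ := fun v => F (fun i =>
    if h : i < j then v ⟨e i, Finset.mem_image_of_mem e (Finset.mem_range.2 h)⟩ else 0) with hF'
  set G' : ((i : T) → ℝ) → ℝ := fun v => G (fun i =>
    if h : i < K - j then v ⟨e (i+j), Finset.mem_image_of_mem e (Finset.mem_Ico.2 ⟨by omega, by omega⟩)⟩ else 0) with hG'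
  have hF'm : Measurable F' := by
    apply hF.comp
    apply measurable_pi_lambda
    intro i
    by_cases h : i < j
    · simp only [dif_pos h]; exact measurable_pi_apply _
    · simp only [dif_neg h]; exact measurable_const
  have hG'm : Measurable G' := by
    apply hG.comp
    apply measurable_pi_lambda
    intro i
    by_cases h : i < K - j
    · simp only [dif_pos h]; exact measurable_pi_apply _
    · simp only [dif_neg h]; exact measurable_const
  have key := base.comp hF'm hG'm
  have hFeq : (fun ω => F' (fun i : S => Z i ω)) = (fun ω => F (fun i => Z (e i) ω)) := by
    funext ω
    exact hFd _ _ (fun i hi => by simp only [dif_pos hi])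
  have hGeq : (fun ω => G' (fun i : T => Z i ω)) = (fun ω => G (fun i => Z (e (i+j)) ω)) := by
    funext ω
    exact hGd _ _ (fun i hi => by simp only [dif_pos hi])
  rw [← hFeq, ← hGeq]
  exact key

theorem momZ (hZid : ∀ i, IdentDistrib (Z i) X0 μ μ) (hX0 : MemLp X0 (n+1) μ)
    (i : Fin (n+1)) {j : ℕ} (hj : j ≤ n+1) :
    Integrable (fun ω => Z i ω ^ j) μ ∧ ∫ ω, Z i ω ^ j ∂μ = ∫ ω, X0 ω ^ j ∂μ := by
  have hzm : MemLp (Z i) (n+1) μ := (hZid i).symm.memLp_snd hX0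
  exact ⟨pow_integrable hzm hj, ((hZid i).comp (measurable_id.pow_const j)).integral_eq⟩

theorem mono2 (hZm : ∀ i, Measurable (Z i))
    (hZi : iIndepFun Z μ)
    (hZid : ∀ i, IdentDistrib (Z i) X0 μ μ) (hX0 : MemLp X0 (n+1) μ)
    {e : ℕ → Fin (n+1)} (he : Set.InjOn e (Set.Iio 2))
    {p q : ℕ} (hp : p ≤ n+1) (hq : q ≤ n+1) :
    Integrable (fun ω => Z (e 0) ω ^ p * Z (e 1) ω ^ q) μ ∧
    ∫ ω, Z (e 0) ω ^ p * Z (e 1) ω ^ q ∂μ = (∫ ω, X0 ω ^ p ∂μ) * ∫ ω, X0 ω ^ q ∂μ := by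
  have hI : IndepFun (fun ω => Z (e 0) ω ^ p) (fun ω => Z (e 1) ω ^ q) μ := by
    have := indep_blocks hZm hZi (K := 2) (j := 1) (by omega) he
      (F := fun x => x 0 ^ p) (G := fun x => x 0 ^ q)
      ((measurable_pi_apply 0).pow_const p) ((measurable_pi_apply 0).pow_const q)
      (fun a b h => by show a 0 ^ p = b 0 ^ p; rw [h 0 (by omega)])
      (fun a b h => by show a 0 ^ q = b 0 ^ q; rw [h 0 (by omega)])
    simpa using this
  have h1 := momZ hZid hX0 (e 0) hp
  have h2 := momZ hZid hX0 (e 1) hq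
  refine ⟨hI.integrable_mul h1.1 h2.1, ?_⟩
  have hmul := hI.integral_fun_mul_eq_mul_integral h1.1.aestronglyMeasurable h2.1.aestronglyMeasurable
  rw [h1.2, h2.2] at hmul
  exact hmul

theorem mono3 (hZm : ∀ i, Measurable (Z i))
    (hZi : iIndepFun Z μ)
    (hZid : ∀ i, IdentDistrib (Z i) X0 μ μ) (hX0 : MemLp X0 (n+1) μ)
    {e : ℕ → Fin (n+1)} (he : Set.InjOn e (Set.Iio 3))
    {p q r : ℕ} (hp : p ≤ n+1) (hq : q ≤ n+1) (hr : r ≤ n+1) :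
    Integrable (fun ω => Z (e 0) ω ^ p * Z (e 1) ω ^ q * Z (e 2) ω ^ r) μ ∧
    ∫ ω, Z (e 0) ω ^ p * Z (e 1) ω ^ q * Z (e 2) ω ^ r ∂μ
      = (∫ ω, X0 ω ^ p ∂μ) * (∫ ω, X0 ω ^ q ∂μ) * ∫ ω, X0 ω ^ r ∂μ := by
  have hI : IndepFun (fun ω => Z (e 0) ω ^ p * Z (e 1) ω ^ q) (fun ω => Z (e 2) ω ^ r) μ := by
    have := indep_blocks hZm hZi (K := 3) (j := 2) (by omega) he
      (F := fun x => x 0 ^ p * x 1 ^ q) (G := fun x => x 0 ^ r)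
      (((measurable_pi_apply 0).pow_const p).mul ((measurable_pi_apply 1).pow_const q))
      ((measurable_pi_apply 0).pow_const r)
      (fun a b h => by show a 0 ^ p * a 1 ^ q = b 0 ^ p * b 1 ^ q; rw [h 0 (by omega), h 1 (by omega)])
      (fun a b h => by show a 0 ^ r = b 0 ^ r; rw [h 0 (by omega)])
    simpa using this
  have h12 := mono2 hZm hZi hZid hX0 (he.mono (by intro i hi; simp only [Set.mem_Iio] at *; omega)) hp hq
  have h3 := momZ hZid hX0 (e 2) hr
  refine ⟨hI.integrable_mul h12.1 h3.1, ?_⟩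
  have hmul := hI.integral_fun_mul_eq_mul_integral h12.1.aestronglyMeasurable h3.1.aestronglyMeasurable
  rw [h12.2, h3.2] at hmul
  exact hmul

theorem diffpow (hZm : ∀ i, Measurable (Z i))
    (hZi : iIndepFun Z μ)
    (hZid : ∀ i, IdentDistrib (Z i) X0 μ μ) (hX0 : MemLp X0 (n+1) μ)
    {e : ℕ → Fin (n+1)} (he : Set.InjOn e (Set.Iio 2))
    {m : ℕ} (hm : m ≤ n+1) :
    Integrable (fun ω => (Z (e 0) ω - Z (e 1) ω) ^ m) μ ∧
    ∫ ω, (Z (e 0) ω - Z (e 1) ω) ^ m ∂μ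
      = ∑ j ∈ range (m+1), (-1:ℝ)^j * (m.choose j : ℝ) * ((∫ ω, X0 ω ^ (m-j) ∂μ) * ∫ ω, X0 ω ^ j ∂μ) := by
  have hterm : ∀ j ∈ range (m+1),
      Integrable (fun ω => (-1:ℝ)^j * (m.choose j : ℝ) * (Z (e 0) ω ^ (m-j) * Z (e 1) ω ^ j)) μ ∧
      ∫ ω, (-1:ℝ)^j * (m.choose j : ℝ) * (Z (e 0) ω ^ (m-j) * Z (e 1) ω ^ j) ∂μ
        = (-1:ℝ)^j * (m.choose j : ℝ) * ((∫ ω, X0 ω ^ (m-j) ∂μ) * ∫ ω, X0 ω ^ j ∂μ) := by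
    intro j hj
    have hj' : j ≤ m := Nat.lt_succ_iff.mp (Finset.mem_range.1 hj)
    have h := mono2 hZm hZi hZid hX0 he (p := m - j) (q := j) (by omega) (by omega)
    exact ⟨h.1.const_mul _, by rw [integral_const_mul, h.2]⟩
  have heq : (fun ω => (Z (e 0) ω - Z (e 1) ω) ^ m)
      = fun ω => ∑ j ∈ range (m+1), (-1:ℝ)^j * (m.choose j : ℝ) * (Z (e 0) ω ^ (m-j) * Z (e 1) ω ^ j) :=
    funext fun ω => sub_pow'' _ _ m
  constructor
  · rw [heq]; exact integrable_finset_sum _ (fun j hj => (hterm j hj).1)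
  · rw [heq, integral_finset_sum _ (fun j hj => (hterm j hj).1)]
    exact Finset.sum_congr rfl fun j hj => (hterm j hj).2

theorem crossterm (hZm : ∀ i, Measurable (Z i))
    (hZi : iIndepFun Z μ)
    (hZid : ∀ i, IdentDistrib (Z i) X0 μ μ) (hX0 : MemLp X0 (n+1) μ)
    (hmean : ∫ ω, X0 ω ∂μ = 0)
    {e : ℕ → Fin (n+1)} (he : Set.InjOn e (Set.Iio 3))
    {m : ℕ} (hm : m + 1 ≤ n+1) :
    Integrable (fun ω => (Z (e 0) ω - Z (e 2) ω) * (Z (e 0) ω - Z (e 1) ω) ^ m) μ ∧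
    ∫ ω, (Z (e 0) ω - Z (e 2) ω) * (Z (e 0) ω - Z (e 1) ω) ^ m ∂μ
      = ∑ j ∈ range (m+1), (-1:ℝ)^j * (m.choose j : ℝ) * ((∫ ω, X0 ω ^ (m+1-j) ∂μ) * ∫ ω, X0 ω ^ j ∂μ) := by
  have hmean1 : ∫ ω, X0 ω ^ 1 ∂μ = 0 := by simpa using hmean
  have he2 : Set.InjOn e (Set.Iio 2) := he.mono (by intro i hi; simp only [Set.mem_Iio] at *; omega)
  have hterm : ∀ j ∈ range (m+1),
      Integrable (fun ω => (-1:ℝ)^j * (m.choose j : ℝ) * (Z (e 0) ω ^ (m+1-j) * Z (e 1) ω ^ j)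
        - (-1:ℝ)^j * (m.choose j : ℝ) * ((Z (e 0) ω ^ (m-j) * Z (e 1) ω ^ j) * Z (e 2) ω ^ 1)) μ ∧
      ∫ ω, ((-1:ℝ)^j * (m.choose j : ℝ) * (Z (e 0) ω ^ (m+1-j) * Z (e 1) ω ^ j)
        - (-1:ℝ)^j * (m.choose j : ℝ) * ((Z (e 0) ω ^ (m-j) * Z (e 1) ω ^ j) * Z (e 2) ω ^ 1)) ∂μ
        = (-1:ℝ)^j * (m.choose j : ℝ) * ((∫ ω, X0 ω ^ (m+1-j) ∂μ) * ∫ ω, X0 ω ^ j ∂μ) := by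
    intro j hj
    have hj' : j ≤ m := Nat.lt_succ_iff.mp (Finset.mem_range.1 hj)
    have h1 := mono2 hZm hZi hZid hX0 he2 (p := m + 1 - j) (q := j) (by omega) (by omega)
    have h2 := mono3 hZm hZi hZid hX0 he (p := m - j) (q := j) (r := 1) (by omega) (by omega) (by omega)
    refine ⟨(h1.1.const_mul _).sub (h2.1.const_mul _), ?_⟩
    rw [integral_sub (h1.1.const_mul _) (h2.1.const_mul _), integral_const_mul, integral_const_mul,
      h1.2, h2.2, hmean1]
    ring
  have heq : (fun ω => (Z (e 0) ω - Z (e 2) ω) * (Z (e 0) ω - Z (e 1) ω) ^ m)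
      = fun ω => ∑ j ∈ range (m+1),
          ((-1:ℝ)^j * (m.choose j : ℝ) * (Z (e 0) ω ^ (m+1-j) * Z (e 1) ω ^ j)
            - (-1:ℝ)^j * (m.choose j : ℝ) * ((Z (e 0) ω ^ (m-j) * Z (e 1) ω ^ j) * Z (e 2) ω ^ 1)) :=
    funext fun ω => expand_cross _ _ _ m
  constructor
  · rw [heq]; exact integrable_finset_sum _ (fun j hj => (hterm j hj).1)
  · rw [heq, integral_finset_sum _ (fun j hj => (hterm j hj).1)]
    exact Finset.sum_congr rfl fun j hj => (hterm j hj).2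

end Core

section Main
variable {Ω : Type*} {mΩ : MeasurableSpace Ω} {μ : Measure Ω} [IsProbabilityMeasure μ]
  {n : ℕ} {X0 : Ω → ℝ} {Z : Fin (n+1) → Ω → ℝ}

theorem main_rec (hZm : ∀ i, Measurable (Z i))
    (hZi : iIndepFun Z μ)
    (hZid : ∀ i, IdentDistrib (Z i) X0 μ μ) (hX0 : MemLp X0 (n+1) μ)
    (hmean : ∫ ω, X0 ω ∂μ = 0) :
    ∀ K : ℕ, 1 ≤ K → K ≤ n + 1 → ∀ e : ℕ → Fin (n+1), Set.InjOn e (Set.Iio (K:ℕ)) →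
      Integrable (fun ω => mbar K (fun i => Z (e i) ω)) μ ∧
      ∫ ω, mbar K (fun i => Z (e i) ω) ∂μ = ∫ ω, X0 ω ^ K ∂μ := by
  have hM0 : ∫ ω, X0 ω ^ 0 ∂μ = 1 := by simp
  have hM1 : ∫ ω, X0 ω ^ 1 ∂μ = 0 := by simpa using hmean
  intro K
  induction K using Nat.strong_induction_on with
  | _ K IH =>
    match K with
    | 0 => intro h; omega
    | 1 =>
      intro _ _ e he
      have heq : (fun ω => mbar 1 (fun i => Z (e i) ω)) = fun _ => (0:ℝ) :=
        funext fun ω => by simp [mbar]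
      refine ⟨?_, ?_⟩ <;> rw [heq]
      · exact integrable_const 0
      · rw [hM1]; simp
    | 2 =>
      intro _ h2 e he
      have hd := diffpow hZm hZi hZid hX0 he (m := 2) (by omega)
      have heq : (fun ω => mbar 2 (fun i => Z (e i) ω))
          = fun ω => (1/2) * (Z (e 0) ω - Z (e 1) ω)^2 := funext fun ω => by simp [mbar]
      refine ⟨?_, ?_⟩ <;> rw [heq]
      · exact hd.1.const_mul _
      · rw [integral_const_mul, hd.2, Finset.sum_range_succ, Finset.sum_range_succ,
          Finset.sum_range_succ, Finset.sum_range_zero]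
        norm_num [hM0, hM1, hmean]
        all_goals ring
    | 3 =>
      intro _ h3 e he
      have hc := crossterm hZm hZi hZid hX0 hmean he (m := 2) (by omega)
      have heq : (fun ω => mbar 3 (fun i => Z (e i) ω))
          = fun ω => (Z (e 0) ω - Z (e 2) ω) * (Z (e 0) ω - Z (e 1) ω)^2 :=
        funext fun ω => by simp [mbar]
      refine ⟨?_, ?_⟩ <;> rw [heq]
      · exact hc.1
      · rw [hc.2, Finset.sum_range_succ, Finset.sum_range_succ, Finset.sum_range_succ,
          Finset.sum_range_zero]
        norm_num [hM0, hM1, hmean]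
        all_goals ring
    | 4 =>
      intro _ h4 e he
      have he2 : Set.InjOn e (Set.Iio 2) := he.mono (by intro i hi; simp only [Set.mem_Iio] at *; omega)
      have he2' : Set.InjOn (fun i => e (i+2)) (Set.Iio 2) := by
        intro a ha b hb hab
        simp only [Set.mem_Iio] at ha hb
        have := he (Set.mem_Iio.2 (by omega : a + 2 < 4)) (Set.mem_Iio.2 (by omega : b + 2 < 4)) hab
        omega
      have hd2 : ∀ e' : ℕ → Fin (n+1), Set.InjOn e' (Set.Iio 2) →
          Integrable (fun ω => (Z (e' 0) ω - Z (e' 1) ω)^2) μ ∧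
          ∫ ω, (Z (e' 0) ω - Z (e' 1) ω)^2 ∂μ = 2 * ∫ ω, X0 ω ^ 2 ∂μ := by
        intro e' he'
        have hd := diffpow hZm hZi hZid hX0 he' (m := 2) (by omega)
        refine ⟨hd.1, ?_⟩
        rw [hd.2, Finset.sum_range_succ, Finset.sum_range_succ, Finset.sum_range_succ,
          Finset.sum_range_zero]
        norm_num [hM0, hM1, hmean]
        all_goals ring
      have hA := diffpow hZm hZi hZid hX0 he2 (m := 4) (by omega)
      have hAv : ∫ ω, (Z (e 0) ω - Z (e 1) ω)^4 ∂μ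
          = 2 * (∫ ω, X0 ω ^ 4 ∂μ) + 6 * (∫ ω, X0 ω ^ 2 ∂μ) * (∫ ω, X0 ω ^ 2 ∂μ) := by
        rw [hA.2, Finset.sum_range_succ, Finset.sum_range_succ, Finset.sum_range_succ,
          Finset.sum_range_succ, Finset.sum_range_succ, Finset.sum_range_zero]
        norm_num [hM0, hM1, hmean, Nat.choose]
        all_goals ring
      have hB1 := hd2 e he2
      have hB2 := hd2 (fun i => e (i+2)) he2'
      have hB2i : Integrable (fun ω => (Z (e 2) ω - Z (e 3) ω)^2) μ := by simpa using hB2.1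
      have hB2v : ∫ ω, (Z (e 2) ω - Z (e 3) ω)^2 ∂μ = 2 * ∫ ω, X0 ω ^ 2 ∂μ := by simpa using hB2.2
      have hIB : IndepFun (fun ω => (Z (e 0) ω - Z (e 1) ω)^2) (fun ω => (Z (e 2) ω - Z (e 3) ω)^2) μ := by
        have := indep_blocks hZm hZi (K := 4) (j := 2) (by omega) he
          (F := fun x => (x 0 - x 1)^2) (G := fun x => (x 0 - x 1)^2)
          (by fun_prop) (by fun_prop)
          (fun a b h => by show (a 0 - a 1)^2 = (b 0 - b 1)^2; rw [h 0 (by omega), h 1 (by omega)])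
          (fun a b h => by show (a 0 - a 1)^2 = (b 0 - b 1)^2; rw [h 0 (by omega), h 1 (by omega)])
        simpa using this
      have hPi : Integrable (fun ω => (Z (e 0) ω - Z (e 1) ω)^2 * (Z (e 2) ω - Z (e 3) ω)^2) μ :=
        hIB.integrable_mul hB1.1 hB2i
      have hPv : ∫ ω, (Z (e 0) ω - Z (e 1) ω)^2 * (Z (e 2) ω - Z (e 3) ω)^2 ∂μ
          = (2 * ∫ ω, X0 ω ^ 2 ∂μ) * (2 * ∫ ω, X0 ω ^ 2 ∂μ) := by
        have := hIB.integral_fun_mul_eq_mul_integral hB1.1.aestronglyMeasurable hB2i.aestronglyMeasurable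
        rw [hB1.2, hB2v] at this
        exact this
      have heq : (fun ω => mbar 4 (fun i => Z (e i) ω))
          = fun ω => (1/2) * (Z (e 0) ω - Z (e 1) ω)^4
              - (3/4) * ((Z (e 0) ω - Z (e 1) ω)^2 * (Z (e 2) ω - Z (e 3) ω)^2) :=
        funext fun ω => by simp only [mbar]; ring
      refine ⟨?_, ?_⟩ <;> rw [heq]
      · exact (hA.1.const_mul _).sub (hPi.const_mul _)
      · rw [integral_sub (hA.1.const_mul _) (hPi.const_mul _), integral_const_mul,
          integral_const_mul, hAv, hPv]
        ring
    | (K0+5) =>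
      intro _ hK e he
      have he3 : Set.InjOn e (Set.Iio 3) := he.mono (by intro i hi; simp only [Set.mem_Iio] at *; omega)
      have hc := crossterm hZm hZi hZid hX0 hmean he3 (m := K0+4) (by omega)
      have hterm : ∀ j ∈ Finset.Icc 2 (K0+3),
          Integrable (fun ω => mbar j (fun i => Z (e i) ω) * mbar (K0+5-j) (fun i => Z (e (i+j)) ω)) μ ∧
          ∫ ω, mbar j (fun i => Z (e i) ω) * mbar (K0+5-j) (fun i => Z (e (i+j)) ω) ∂μ
            = (∫ ω, X0 ω ^ j ∂μ) * ∫ ω, X0 ω ^ (K0+5-j) ∂μ := by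
        intro j hj
        rw [Finset.mem_Icc] at hj
        have hf := IH j (by omega) (by omega) (by omega) e
          (he.mono (by intro i hi; simp only [Set.mem_Iio] at *; omega))
        have hg := IH (K0+5-j) (by omega) (by omega) (by omega) (fun i => e (i+j)) (by
          intro a ha b hb hab
          simp only [Set.mem_Iio] at ha hb
          have := he (Set.mem_Iio.2 (by omega : a + j < K0+5)) (Set.mem_Iio.2 (by omega : b + j < K0+5)) hab
          omega)
        have hI : IndepFun (fun ω => mbar j (fun i => Z (e i) ω))
            (fun ω => mbar (K0+5-j) (fun i => Z (e (i+j)) ω)) μ :=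
          indep_blocks hZm hZi (K := K0+5) (j := j) (by omega) he
            (mbar_measurable j) (mbar_measurable _)
            (fun a b h => mbar_congr j a b h)
            (fun a b h => mbar_congr _ a b (fun i hi => h i (by omega)))
        refine ⟨hI.integrable_mul hf.1 hg.1, ?_⟩
        have hmul := hI.integral_fun_mul_eq_mul_integral hf.1.aestronglyMeasurable hg.1.aestronglyMeasurable
        rw [hf.2, hg.2] at hmul
        exact hmul
      have heq : (fun ω => mbar (K0+5) (fun i => Z (e i) ω))
          = fun ω => (Z (e 0) ω - Z (e 2) ω) * (Z (e 0) ω - Z (e 1) ω) ^ (K0+4)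
              - ∑ j ∈ Finset.Icc 2 (K0+3), (-1:ℝ)^j * ((K0+4).choose j : ℝ)
                  * (mbar j (fun i => Z (e i) ω) * mbar (K0+5-j) (fun i => Z (e (i+j)) ω)) := by
        funext ω
        rw [mbar]
        congr 1
        rw [← Finset.sum_attach (Finset.Icc 2 (K0+3)) (fun j => (-1:ℝ)^j * ((K0+4).choose j : ℝ)
          * (mbar j (fun i => Z (e i) ω) * mbar (K0+5-j) (fun i => Z (e (i+j)) ω)))]
        exact Finset.sum_congr rfl fun j _ => by ring
      have hsumInt : Integrable (fun ω => ∑ j ∈ Finset.Icc 2 (K0+3),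
          (-1:ℝ)^j * ((K0+4).choose j : ℝ)
            * (mbar j (fun i => Z (e i) ω) * mbar (K0+5-j) (fun i => Z (e (i+j)) ω))) μ :=
        integrable_finset_sum _ (fun j hj => ((hterm j hj).1).const_mul _)
      refine ⟨?_, ?_⟩ <;> rw [heq]
      · exact hc.1.sub hsumInt
      · rw [integral_sub hc.1 hsumInt, hc.2,
          integral_finset_sum _ (fun j hj => ((hterm j hj).1).const_mul _)]
        have hsum2 : ∑ j ∈ Finset.Icc 2 (K0+3), ∫ ω, (-1:ℝ)^j * ((K0+4).choose j : ℝ)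
              * (mbar j (fun i => Z (e i) ω) * mbar (K0+5-j) (fun i => Z (e (i+j)) ω)) ∂μ
            = ∑ j ∈ Finset.Icc 2 (K0+3), (-1:ℝ)^j * ((K0+4).choose j : ℝ)
              * ((∫ ω, X0 ω ^ (K0+4+1-j) ∂μ) * ∫ ω, X0 ω ^ j ∂μ) := by
          refine Finset.sum_congr rfl fun j hj => ?_
          rw [Finset.mem_Icc] at hj
          rw [integral_const_mul, (hterm j (Finset.mem_Icc.2 hj)).2,
            show K0+4+1-j = K0+5-j from by omega]
          ring
        rw [hsum2]
        rw [show Finset.range (K0+4+1) = insert 0 (insert 1 (insert (K0+4) (Finset.Icc 2 (K0+3)))) from by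
          ext i; simp only [Finset.mem_range, Finset.mem_insert, Finset.mem_Icc]; omega]
        rw [Finset.sum_insert (by simp only [Finset.mem_insert, Finset.mem_Icc]; omega),
          Finset.sum_insert (by simp only [Finset.mem_insert, Finset.mem_Icc]; omega),
          Finset.sum_insert (by simp only [Finset.mem_Icc]; omega)]
        rw [show K0+4+1-0 = K0+5 from by omega, show K0+4+1-1 = K0+4 from by omega,
          show K0+4+1-(K0+4) = 1 from by omega]
        rw [hM0, hM1]
        simp only [pow_zero, Nat.choose_zero_right, Nat.cast_one, Nat.choose_self, pow_one]
        ring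
      
end Main

theorem recursive_D_representation_of_central_moments
    {Ω : Type*} {mΩ : MeasurableSpace Ω} {μ : Measure Ω} [IsProbabilityMeasure μ]
    (n : ℕ) (hn : 1 ≤ n)
    (X : Ω → ℝ) (Y : Fin (n + 1) → Ω → ℝ) (μX : ℝ)
    (hX : MemLp X (n + 1) μ)
    (hμX : μX = ∫ a, X a ∂μ)
    (hindep : iIndepFun Y μ)
    (hid : ∀ i, IdentDistrib (Y i) X μ μ) :
    ∀ k, 1 ≤ k → k ≤ n →
      ∫ ω, mbar (k + 1) (fun i => Y ((i : ℕ) : Fin (n + 1)) ω) ∂μ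
        = ∫ ω, (X ω - μX) ^ (k + 1) ∂μ := by
  intro k hk1 hkn
  -- measurable modifications of Y
  have hYae : ∀ i, AEMeasurable (Y i) μ := fun i => (hid i).aemeasurable_fst
  set g : Fin (n+1) → Ω → ℝ := fun i => (hYae i).mk (Y i) with hg
  have hgm : ∀ i, Measurable (g i) := fun i => (hYae i).measurable_mk
  have hge : ∀ i, Y i =ᵐ[μ] g i := fun i => (hYae i).ae_eq_mk
  have hindep_g : iIndepFun g μ := iIndepFun_congr_ae hindep hge
  set X0 : Ω → ℝ := fun ω => X ω - μX with hX0def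
  set Z : Fin (n+1) → Ω → ℝ := fun i ω => g i ω - μX with hZdef
  have hZm : ∀ i, Measurable (Z i) := fun i => (hgm i).sub measurable_const
  have hZi : iIndepFun Z μ := by
    have := hindep_g.comp (fun _ => fun t : ℝ => t - μX) (fun _ => measurable_id.sub measurable_const)
    exact this
  have hZid : ∀ i, IdentDistrib (Z i) X0 μ μ := by
    intro i
    have h1 : IdentDistrib (g i) X μ μ :=
      (IdentDistrib.of_ae_eq (hgm i).aemeasurable (hge i).symm).trans (hid i)
    exact h1.comp (measurable_id.sub measurable_const)
  have hX0mem : MemLp X0 (n+1) μ := hX.sub (memLp_const μX)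
  have hXint : Integrable X μ := hX.integrable le_add_self
  have hmean : ∫ ω, X0 ω ∂μ = 0 := by
    have : ∫ ω, X0 ω ∂μ = ∫ ω, (X ω - μX) ∂μ := rfl
    rw [this, integral_sub hXint (integrable_const μX), integral_const]
    simp [measure_univ, hμX]
  have he : Set.InjOn (fun i : ℕ => ((i : ℕ) : Fin (n+1))) (Set.Iio (k+1)) := by
    intro a ha b hb hab
    simp only [Set.mem_Iio] at ha hb
    have h1 := congrArg Fin.val hab
    simp only [Fin.val_natCast] at h1
    rw [Nat.mod_eq_of_lt (by omega), Nat.mod_eq_of_lt (by omega)] at h1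
    exact h1
  have hmain := main_rec hZm hZi hZid hX0mem hmean (k+1) (by omega) (by omega)
    (fun i : ℕ => ((i : ℕ) : Fin (n+1))) he
  have hall : ∀ᵐ ω ∂μ, ∀ j : Fin (n+1), Y j ω = g j ω := ae_all_iff.2 hge
  have hcongr : ∀ᵐ ω ∂μ, mbar (k+1) (fun i : ℕ => Y ((i:ℕ) : Fin (n+1)) ω)
      = mbar (k+1) (fun i : ℕ => Z ((i:ℕ) : Fin (n+1)) ω) := by
    filter_upwards [hall] with ω hω
    have h2 : (fun i : ℕ => Y ((i:ℕ) : Fin (n+1)) ω)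
        = fun i : ℕ => Z ((i:ℕ) : Fin (n+1)) ω + μX := by
      funext i
      rw [hω]
      simp [hZdef]
    rw [h2, mbar_add_const]
  rw [integral_congr_ae hcongr, hmain.2]
end
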